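/- The volume of the regular ideal tetrahedron satisfies the numerical bounds 1.0149 < 3Λ(π/3) < 1.0150. -/

import Mathlib

open MeasureTheory Real
open Set

/-- The Lobachevsky function `Λ(θ) = -∫₀^θ log |2 sin t| dt`. -/
noncomputable def lobachevsky (θ : ℝ) : ℝ :=
  -∫ t in (0:ℝ)..θ, Real.log |2 * Real.sin t|

lemma nonneg_aux {f f' : ℝ → ℝ} (hd : ∀ t, HasDerivAt f (f' t) t) (h0 : f 0 = 0)
    (h' : ∀ t, 0 ≤ t → 0 ≤ f' t) : ∀ t, 0 ≤ t → 0 ≤ f t := by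
  intro t ht
  have hmono : MonotoneOn f (Set.Ici 0) := by
    apply monotoneOn_of_deriv_nonneg (convex_Ici 0)
      (fun x _ => ((hd x).continuousAt).continuousWithinAt)
      (fun x hx => ((hd x).differentiableAt).differentiableWithinAt)
    intro x hx
    rw [(hd x).deriv]
    exact h' x (le_of_lt (by simpa [interior_Ici] using hx))
  have h2 := hmono (Set.self_mem_Ici) (Set.mem_Ici.2 ht) ht
  rwa [h0] at h2

lemma tb0 : ∀ t : ℝ, 0 ≤ t → 0 ≤ t - Real.sin t := by
  apply nonneg_aux (f' := fun t => 1 - Real.cos t)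
  · intro x
    exact ((hasDerivAt_id x).sub (Real.hasDerivAt_sin x)).congr_deriv (by push_cast; ring)
  · norm_num
  · intro t _; nlinarith [Real.cos_le_one t]

lemma tb1 : ∀ t : ℝ, 0 ≤ t → 0 ≤ (fun t => Real.cos t - (1 - ((1:ℝ)/2)*t^2)) t := by
  apply nonneg_aux (f' := fun t => t - Real.sin t)
  · intro x
    exact ((Real.hasDerivAt_cos x).sub ((hasDerivAt_const x (1:ℝ)).sub (HasDerivAt.const_mul ((1:ℝ)/2) (hasDerivAt_pow 2 x)))).congr_deriv (by push_cast; ring)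
  · norm_num
  · exact tb0

lemma tb2 : ∀ t : ℝ, 0 ≤ t → 0 ≤ (fun t => Real.sin t - (t - ((1:ℝ)/6)*t^3)) t := by
  apply nonneg_aux (f' := fun t => Real.cos t - (1 - ((1:ℝ)/2)*t^2))
  · intro x
    exact ((Real.hasDerivAt_sin x).sub ((hasDerivAt_id x).sub (HasDerivAt.const_mul ((1:ℝ)/6) (hasDerivAt_pow 3 x)))).congr_deriv (by push_cast; ring)
  · norm_num
  · exact tb1

lemma tb3 : ∀ t : ℝ, 0 ≤ t → 0 ≤ (fun t => (1 - ((1:ℝ)/2)*t^2 + ((1:ℝ)/24)*t^4) - Real.cos t) t := by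
  apply nonneg_aux (f' := fun t => Real.sin t - (t - ((1:ℝ)/6)*t^3))
  · intro x
    exact ((((hasDerivAt_const x (1:ℝ)).sub (HasDerivAt.const_mul ((1:ℝ)/2) (hasDerivAt_pow 2 x))).add (HasDerivAt.const_mul ((1:ℝ)/24) (hasDerivAt_pow 4 x))).sub (Real.hasDerivAt_cos x)).congr_deriv (by push_cast; ring)
  · norm_num
  · exact tb2

lemma tb4 : ∀ t : ℝ, 0 ≤ t → 0 ≤ (fun t => (t - ((1:ℝ)/6)*t^3 + ((1:ℝ)/120)*t^5) - Real.sin t) t := by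
  apply nonneg_aux (f' := fun t => (1 - ((1:ℝ)/2)*t^2 + ((1:ℝ)/24)*t^4) - Real.cos t)
  · intro x
    exact ((((hasDerivAt_id x).sub (HasDerivAt.const_mul ((1:ℝ)/6) (hasDerivAt_pow 3 x))).add (HasDerivAt.const_mul ((1:ℝ)/120) (hasDerivAt_pow 5 x))).sub (Real.hasDerivAt_sin x)).congr_deriv (by push_cast; ring)
  · norm_num
  · exact tb3

lemma tb5 : ∀ t : ℝ, 0 ≤ t → 0 ≤ (fun t => Real.cos t - (1 - ((1:ℝ)/2)*t^2 + ((1:ℝ)/24)*t^4 - ((1:ℝ)/720)*t^6)) t := by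
  apply nonneg_aux (f' := fun t => (t - ((1:ℝ)/6)*t^3 + ((1:ℝ)/120)*t^5) - Real.sin t)
  · intro x
    exact ((Real.hasDerivAt_cos x).sub ((((hasDerivAt_const x (1:ℝ)).sub (HasDerivAt.const_mul ((1:ℝ)/2) (hasDerivAt_pow 2 x))).add (HasDerivAt.const_mul ((1:ℝ)/24) (hasDerivAt_pow 4 x))).sub (HasDerivAt.const_mul ((1:ℝ)/720) (hasDerivAt_pow 6 x)))).congr_deriv (by push_cast; ring)
  · norm_num
  · exact tb4

lemma tb6 : ∀ t : ℝ, 0 ≤ t → 0 ≤ (fun t => Real.sin t - (t - ((1:ℝ)/6)*t^3 + ((1:ℝ)/120)*t^5 - ((1:ℝ)/5040)*t^7)) t := by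
  apply nonneg_aux (f' := fun t => Real.cos t - (1 - ((1:ℝ)/2)*t^2 + ((1:ℝ)/24)*t^4 - ((1:ℝ)/720)*t^6))
  · intro x
    exact ((Real.hasDerivAt_sin x).sub ((((hasDerivAt_id x).sub (HasDerivAt.const_mul ((1:ℝ)/6) (hasDerivAt_pow 3 x))).add (HasDerivAt.const_mul ((1:ℝ)/120) (hasDerivAt_pow 5 x))).sub (HasDerivAt.const_mul ((1:ℝ)/5040) (hasDerivAt_pow 7 x)))).congr_deriv (by push_cast; ring)
  · norm_num
  · exact tb5

lemma tb7 : ∀ t : ℝ, 0 ≤ t → 0 ≤ (fun t => (1 - ((1:ℝ)/2)*t^2 + ((1:ℝ)/24)*t^4 - ((1:ℝ)/720)*t^6 + ((1:ℝ)/40320)*t^8) - Real.cos t) t := by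
  apply nonneg_aux (f' := fun t => Real.sin t - (t - ((1:ℝ)/6)*t^3 + ((1:ℝ)/120)*t^5 - ((1:ℝ)/5040)*t^7))
  · intro x
    exact ((((((hasDerivAt_const x (1:ℝ)).sub (HasDerivAt.const_mul ((1:ℝ)/2) (hasDerivAt_pow 2 x))).add (HasDerivAt.const_mul ((1:ℝ)/24) (hasDerivAt_pow 4 x))).sub (HasDerivAt.const_mul ((1:ℝ)/720) (hasDerivAt_pow 6 x))).add (HasDerivAt.const_mul ((1:ℝ)/40320) (hasDerivAt_pow 8 x))).sub (Real.hasDerivAt_cos x)).congr_deriv (by push_cast; ring)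
  · norm_num
  · exact tb6

lemma tb8 : ∀ t : ℝ, 0 ≤ t → 0 ≤ (fun t => (t - ((1:ℝ)/6)*t^3 + ((1:ℝ)/120)*t^5 - ((1:ℝ)/5040)*t^7 + ((1:ℝ)/362880)*t^9) - Real.sin t) t := by
  apply nonneg_aux (f' := fun t => (1 - ((1:ℝ)/2)*t^2 + ((1:ℝ)/24)*t^4 - ((1:ℝ)/720)*t^6 + ((1:ℝ)/40320)*t^8) - Real.cos t)
  · intro x
    exact ((((((hasDerivAt_id x).sub (HasDerivAt.const_mul ((1:ℝ)/6) (hasDerivAt_pow 3 x))).add (HasDerivAt.const_mul ((1:ℝ)/120) (hasDerivAt_pow 5 x))).sub (HasDerivAt.const_mul ((1:ℝ)/5040) (hasDerivAt_pow 7 x))).add (HasDerivAt.const_mul ((1:ℝ)/362880) (hasDerivAt_pow 9 x))).sub (Real.hasDerivAt_sin x)).congr_deriv (by push_cast; ring)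
  · norm_num
  · exact tb7

lemma tb9 : ∀ t : ℝ, 0 ≤ t → 0 ≤ (fun t => Real.cos t - (1 - ((1:ℝ)/2)*t^2 + ((1:ℝ)/24)*t^4 - ((1:ℝ)/720)*t^6 + ((1:ℝ)/40320)*t^8 - ((1:ℝ)/3628800)*t^10)) t := by
  apply nonneg_aux (f' := fun t => (t - ((1:ℝ)/6)*t^3 + ((1:ℝ)/120)*t^5 - ((1:ℝ)/5040)*t^7 + ((1:ℝ)/362880)*t^9) - Real.sin t)
  · intro x
    exact ((Real.hasDerivAt_cos x).sub ((((((hasDerivAt_const x (1:ℝ)).sub (HasDerivAt.const_mul ((1:ℝ)/2) (hasDerivAt_pow 2 x))).add (HasDerivAt.const_mul ((1:ℝ)/24) (hasDerivAt_pow 4 x))).sub (HasDerivAt.const_mul ((1:ℝ)/720) (hasDerivAt_pow 6 x))).add (HasDerivAt.const_mul ((1:ℝ)/40320) (hasDerivAt_pow 8 x))).sub (HasDerivAt.const_mul ((1:ℝ)/3628800) (hasDerivAt_pow 10 x)))).congr_deriv (by push_cast; ring)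
  · norm_num
  · exact tb8

lemma tb10 : ∀ t : ℝ, 0 ≤ t → 0 ≤ (fun t => Real.sin t - (t - ((1:ℝ)/6)*t^3 + ((1:ℝ)/120)*t^5 - ((1:ℝ)/5040)*t^7 + ((1:ℝ)/362880)*t^9 - ((1:ℝ)/39916800)*t^11)) t := by
  apply nonneg_aux (f' := fun t => Real.cos t - (1 - ((1:ℝ)/2)*t^2 + ((1:ℝ)/24)*t^4 - ((1:ℝ)/720)*t^6 + ((1:ℝ)/40320)*t^8 - ((1:ℝ)/3628800)*t^10))
  · intro x
    exact ((Real.hasDerivAt_sin x).sub ((((((hasDerivAt_id x).sub (HasDerivAt.const_mul ((1:ℝ)/6) (hasDerivAt_pow 3 x))).add (HasDerivAt.const_mul ((1:ℝ)/120) (hasDerivAt_pow 5 x))).sub (HasDerivAt.const_mul ((1:ℝ)/5040) (hasDerivAt_pow 7 x))).add (HasDerivAt.const_mul ((1:ℝ)/362880) (hasDerivAt_pow 9 x))).sub (HasDerivAt.const_mul ((1:ℝ)/39916800) (hasDerivAt_pow 11 x)))).congr_deriv (by push_cast; ring)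
  · norm_num
  · exact tb9


noncomputable def gUp (t : ℝ) : ℝ := -((1:ℝ)/6)*t^2 - ((1:ℝ)/180)*t^4 - ((1:ℝ)/2835)*t^6 - ((1:ℝ)/37800)*t^8 - ((23:ℝ)/10886400)*t^10 + ((2660957:ℝ)/86873472000)*t^12 - ((5249:ℝ)/9144576000)*t^14 + ((208337:ℝ)/6584094720000)*t^16 - ((112927:ℝ)/138265989120000)*t^18 + ((113507:ℝ)/13826598912000000)*t^20 - ((1:ℝ)/663676747776000)*t^22 + ((1:ℝ)/143354177519616000)*t^24
noncomputable def gLo (t : ℝ) : ℝ := -((1:ℝ)/6)*t^2 - ((1:ℝ)/180)*t^4 - ((1:ℝ)/2835)*t^6 - ((1:ℝ)/37800)*t^8 - ((4931:ℝ)/119750400)*t^10 - ((15439:ℝ)/603288000)*t^12 - ((31:ℝ)/1524096000)*t^14 + ((1:ℝ)/3048192000)*t^16 - ((1:ℝ)/384072192000)*t^18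

set_option maxHeartbeats 2000000 in
lemma g_bounds : ∀ t : ℝ, 0 ≤ t → t ≤ 1.048 →
    gLo t ≤ Real.log (Real.sin t) - Real.log t ∧
      Real.log (Real.sin t) - Real.log t ≤ gUp t := by
  intro t ht0 ht1
  rcases ht0.eq_or_lt with h0 | h0
  · rw [← h0]
    norm_num [gLo, gUp]
  · have hπ : t < π := lt_of_le_of_lt ht1 (by linarith [Real.pi_gt_three])
    have hs : 0 < Real.sin t := Real.sin_pos_of_pos_of_lt_pi h0 hπ
    obtain ⟨w, hw⟩ : ∃ w : ℝ, w = 1 - Real.sin t / t := ⟨_, rfl⟩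
    have hglog : Real.log (Real.sin t) - Real.log t = Real.log (1 - w) := by
      have hww : (1:ℝ) - w = Real.sin t / t := by rw [hw]; ring
      rw [← Real.log_div hs.ne' h0.ne', hww]
    have ht2 : t^2 ≤ 1.098304 := by nlinarith
    have e1 : t^4 ≤ 1.098304*t^2 := by nlinarith [mul_nonneg (sub_nonneg.2 ht2) (sq_nonneg t)]
    have e2 : t^8 ≤ 1.098304*t^6 := by nlinarith [mul_nonneg (sub_nonneg.2 ht2) (pow_nonneg ht0 6)]
    have hw0 : 0 ≤ w := by
      have h := tb0 t ht0
      have h2 : Real.sin t / t ≤ 1 := by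
        rw [div_le_one h0]; linarith
      rw [hw]; linarith
    have hwU1 : w ≤ ((1:ℝ)/6)*t^2 := by
      have h := tb2 t ht0
      have h2 : 1 - ((1:ℝ)/6)*t^2 ≤ Real.sin t / t := by
        rw [le_div_iff₀ h0]; linarith [h]
      rw [hw]; linarith
    have hwU3 : w ≤ ((1:ℝ)/6)*t^2 - ((1:ℝ)/120)*t^4 + ((1:ℝ)/5040)*t^6 := by
      have h := tb6 t ht0
      have h2 : 1 - (((1:ℝ)/6)*t^2 - ((1:ℝ)/120)*t^4 + ((1:ℝ)/5040)*t^6) ≤ Real.sin t / t := by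
        rw [le_div_iff₀ h0]; linarith [h]
      rw [hw]; linarith
    have hwB5 : w ≤ ((1:ℝ)/6)*t^2 - ((1:ℝ)/120)*t^4 + ((1:ℝ)/5040)*t^6 - ((1:ℝ)/362880)*t^8 + ((1:ℝ)/39916800)*t^10 := by
      have h := tb10 t ht0
      have h2 : 1 - (((1:ℝ)/6)*t^2 - ((1:ℝ)/120)*t^4 + ((1:ℝ)/5040)*t^6 - ((1:ℝ)/362880)*t^8 + ((1:ℝ)/39916800)*t^10) ≤ Real.sin t / t := by
        rw [le_div_iff₀ h0]; linarith [h]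
      rw [hw]; linarith
    have hwL2 : ((1:ℝ)/6)*t^2 - ((1:ℝ)/120)*t^4 ≤ w := by
      have h := tb4 t ht0
      have h2 : Real.sin t / t ≤ 1 - (((1:ℝ)/6)*t^2 - ((1:ℝ)/120)*t^4) := by
        rw [div_le_iff₀ h0]; linarith [h]
      rw [hw]; linarith
    have hwA4 : ((1:ℝ)/6)*t^2 - ((1:ℝ)/120)*t^4 + ((1:ℝ)/5040)*t^6 - ((1:ℝ)/362880)*t^8 ≤ w := by
      have h := tb8 t ht0
      have h2 : Real.sin t / t ≤ 1 - (((1:ℝ)/6)*t^2 - ((1:ℝ)/120)*t^4 + ((1:ℝ)/5040)*t^6 - ((1:ℝ)/362880)*t^8) := by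
        rw [div_le_iff₀ h0]; linarith [h]
      rw [hw]; linarith
    have hwhi : w ≤ 0.1830507 := by nlinarith [hwU1]
    have hw1 : |w| < 1 := by
      rw [abs_of_nonneg hw0]; linarith
    have habs := Real.abs_log_sub_add_sum_range_le hw1 5
    rw [abs_of_nonneg hw0, abs_le] at habs
    obtain ⟨habs1, habs2⟩ := habs
    simp only [Finset.sum_range_succ, Finset.sum_range_zero] at habs1 habs2
    norm_num at habs1 habs2
    have htail : w^6/(1-w) ≤ t^12/38000 := by
      have h6 : w^6 ≤ (((1:ℝ)/6)*t^2)^6 := pow_le_pow_left₀ hw0 hwU1 6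
      have hd : (0.8169:ℝ) ≤ 1 - w := by linarith
      have h7 : w^6/(1-w) ≤ (((1:ℝ)/6)*t^2)^6/0.8169 :=
        div_le_div₀ (by positivity) h6 (by norm_num) hd
      have h8 : (((1:ℝ)/6)*t^2)^6/(0.8169:ℝ) ≤ t^12/38000 := by
        rw [div_le_div_iff₀ (by norm_num) (by norm_num)]
        nlinarith [pow_nonneg ht0 12]
      linarith
    have hA4nn : (0:ℝ) ≤ ((1:ℝ)/6)*t^2 - ((1:ℝ)/120)*t^4 + ((1:ℝ)/5040)*t^6 - ((1:ℝ)/362880)*t^8 := by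
      nlinarith [e1, e2, sq_nonneg t, pow_nonneg ht0 6]
    have hL2nn : (0:ℝ) ≤ ((1:ℝ)/6)*t^2 - ((1:ℝ)/120)*t^4 := by
      nlinarith [e1, sq_nonneg t]
    have hp2 : (((1:ℝ)/6)*t^2 - ((1:ℝ)/120)*t^4 + ((1:ℝ)/5040)*t^6 - ((1:ℝ)/362880)*t^8)^2 ≤ w^2 := pow_le_pow_left₀ hA4nn hwA4 2
    have hp3 : (((1:ℝ)/6)*t^2 - ((1:ℝ)/120)*t^4 + ((1:ℝ)/5040)*t^6 - ((1:ℝ)/362880)*t^8)^3 ≤ w^3 := pow_le_pow_left₀ hA4nn hwA4 3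
    have hp4 : (((1:ℝ)/6)*t^2 - ((1:ℝ)/120)*t^4)^4 ≤ w^4 := pow_le_pow_left₀ hL2nn hwL2 4
    have hp5 : (((1:ℝ)/6)*t^2 - ((1:ℝ)/120)*t^4)^5 ≤ w^5 := pow_le_pow_left₀ hL2nn hwL2 5
    have hq2 : w^2 ≤ (((1:ℝ)/6)*t^2 - ((1:ℝ)/120)*t^4 + ((1:ℝ)/5040)*t^6)^2 := pow_le_pow_left₀ hw0 hwU3 2
    have hq3 : w^3 ≤ (((1:ℝ)/6)*t^2 - ((1:ℝ)/120)*t^4 + ((1:ℝ)/5040)*t^6)^3 := pow_le_pow_left₀ hw0 hwU3 3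
    have hq4 : w^4 ≤ (((1:ℝ)/6)*t^2)^4 := pow_le_pow_left₀ hw0 hwU1 4
    have hq5 : w^5 ≤ (((1:ℝ)/6)*t^2)^5 := pow_le_pow_left₀ hw0 hwU1 5
    have hringU : gUp t = -((((1:ℝ)/6)*t^2 - ((1:ℝ)/120)*t^4 + ((1:ℝ)/5040)*t^6 - ((1:ℝ)/362880)*t^8) + (((1:ℝ)/6)*t^2 - ((1:ℝ)/120)*t^4 + ((1:ℝ)/5040)*t^6 - ((1:ℝ)/362880)*t^8)^2/2 + (((1:ℝ)/6)*t^2 - ((1:ℝ)/120)*t^4 + ((1:ℝ)/5040)*t^6 - ((1:ℝ)/362880)*t^8)^3/3 + (((1:ℝ)/6)*t^2 - ((1:ℝ)/120)*t^4)^4/4 + (((1:ℝ)/6)*t^2 - ((1:ℝ)/120)*t^4)^5/5) + t^12/38000 := by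
      simp only [gUp]; ring
    have hringL : gLo t = -((((1:ℝ)/6)*t^2 - ((1:ℝ)/120)*t^4 + ((1:ℝ)/5040)*t^6 - ((1:ℝ)/362880)*t^8 + ((1:ℝ)/39916800)*t^10) + (((1:ℝ)/6)*t^2 - ((1:ℝ)/120)*t^4 + ((1:ℝ)/5040)*t^6)^2/2 + (((1:ℝ)/6)*t^2 - ((1:ℝ)/120)*t^4 + ((1:ℝ)/5040)*t^6)^3/3 + (((1:ℝ)/6)*t^2)^4/4 + (((1:ℝ)/6)*t^2)^5/5) - t^12/38000 := by
      simp only [gLo]; ring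
    rw [hglog]
    constructor
    · linarith [habs2, htail, hq2, hq3, hq4, hq5, hwB5, hringL]
    · linarith [habs1, htail, hp2, hp3, hp4, hp5, hwA4, hringU]

-- margins: 2.70e-05 2.80e-05
lemma gUp_cont : Continuous gUp := by
  unfold gUp; fun_prop

set_option maxHeartbeats 1000000 in
lemma int_gUp : ∫ t in (0:ℝ)..(π/3), gUp t = (-((1:ℝ)/18))*(π/3)^3 - ((1:ℝ)/900)*(π/3)^5 - ((1:ℝ)/19845)*(π/3)^7 - ((1:ℝ)/340200)*(π/3)^9 - ((23:ℝ)/119750400)*(π/3)^11 + ((204689:ℝ)/86873472000)*(π/3)^13 - ((5249:ℝ)/137168640000)*(π/3)^15 + ((208337:ℝ)/111929610240000)*(π/3)^17 - ((112927:ℝ)/2627053793280000)*(π/3)^19 + ((113507:ℝ)/290358577152000000)*(π/3)^21 - ((1:ℝ)/15264565198848000)*(π/3)^23 + ((1:ℝ)/3583854437990400000)*(π/3)^25 := by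
  have h := intervalIntegral.integral_eq_sub_of_hasDerivAt
    (f := fun x : ℝ => (-((1:ℝ)/18))*x^3 - ((1:ℝ)/900)*x^5 - ((1:ℝ)/19845)*x^7 - ((1:ℝ)/340200)*x^9 - ((23:ℝ)/119750400)*x^11 + ((204689:ℝ)/86873472000)*x^13 - ((5249:ℝ)/137168640000)*x^15 + ((208337:ℝ)/111929610240000)*x^17 - ((112927:ℝ)/2627053793280000)*x^19 + ((113507:ℝ)/290358577152000000)*x^21 - ((1:ℝ)/15264565198848000)*x^23 + ((1:ℝ)/3583854437990400000)*x^25) (f' := gUp) (a := 0) (b := π/3)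
    (fun x _ => by
      simp only [gUp]
      refine ((((((((((((HasDerivAt.const_mul (-((1:ℝ)/18)) (hasDerivAt_pow 3 x)).sub (HasDerivAt.const_mul ((1:ℝ)/900) (hasDerivAt_pow 5 x))).sub (HasDerivAt.const_mul ((1:ℝ)/19845) (hasDerivAt_pow 7 x))).sub (HasDerivAt.const_mul ((1:ℝ)/340200) (hasDerivAt_pow 9 x))).sub (HasDerivAt.const_mul ((23:ℝ)/119750400) (hasDerivAt_pow 11 x))).add (HasDerivAt.const_mul ((204689:ℝ)/86873472000) (hasDerivAt_pow 13 x))).sub (HasDerivAt.const_mul ((5249:ℝ)/137168640000) (hasDerivAt_pow 15 x))).add (HasDerivAt.const_mul ((208337:ℝ)/111929610240000) (hasDerivAt_pow 17 x))).sub (HasDerivAt.const_mul ((112927:ℝ)/2627053793280000) (hasDerivAt_pow 19 x))).add (HasDerivAt.const_mul ((113507:ℝ)/290358577152000000) (hasDerivAt_pow 21 x))).sub (HasDerivAt.const_mul ((1:ℝ)/15264565198848000) (hasDerivAt_pow 23 x))).add (HasDerivAt.const_mul ((1:ℝ)/3583854437990400000) (hasDerivAt_pow 25 x))).congr_deriv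 ?_
      push_cast; ring)
    (gUp_cont.intervalIntegrable 0 (π/3))
  rw [h]
  norm_num

lemma gLo_cont : Continuous gLo := by
  unfold gLo; fun_prop

set_option maxHeartbeats 1000000 in
lemma int_gLo : ∫ t in (0:ℝ)..(π/3), gLo t = (-((1:ℝ)/18))*(π/3)^3 - ((1:ℝ)/900)*(π/3)^5 - ((1:ℝ)/19845)*(π/3)^7 - ((1:ℝ)/340200)*(π/3)^9 - ((4931:ℝ)/1317254400)*(π/3)^11 - ((15439:ℝ)/7842744000)*(π/3)^13 - ((31:ℝ)/22861440000)*(π/3)^15 + ((1:ℝ)/51819264000)*(π/3)^17 - ((1:ℝ)/7297371648000)*(π/3)^19 := by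
  have h := intervalIntegral.integral_eq_sub_of_hasDerivAt
    (f := fun x : ℝ => (-((1:ℝ)/18))*x^3 - ((1:ℝ)/900)*x^5 - ((1:ℝ)/19845)*x^7 - ((1:ℝ)/340200)*x^9 - ((4931:ℝ)/1317254400)*x^11 - ((15439:ℝ)/7842744000)*x^13 - ((31:ℝ)/22861440000)*x^15 + ((1:ℝ)/51819264000)*x^17 - ((1:ℝ)/7297371648000)*x^19) (f' := gLo) (a := 0) (b := π/3)
    (fun x _ => by
      simp only [gLo]
      refine (((((((((HasDerivAt.const_mul (-((1:ℝ)/18)) (hasDerivAt_pow 3 x)).sub (HasDerivAt.const_mul ((1:ℝ)/900) (hasDerivAt_pow 5 x))).sub (HasDerivAt.const_mul ((1:ℝ)/19845) (hasDerivAt_pow 7 x))).sub (HasDerivAt.const_mul ((1:ℝ)/340200) (hasDerivAt_pow 9 x))).sub (HasDerivAt.const_mul ((4931:ℝ)/1317254400) (hasDerivAt_pow 11 x))).sub (HasDerivAt.const_mul ((15439:ℝ)/7842744000) (hasDerivAt_pow 13 x))).sub (HasDerivAt.const_mul ((31:ℝ)/22861440000) (hasDerivAt_pow 15 x))).add (HasDerivAt.const_mul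 ((1:ℝ)/51819264000) (hasDerivAt_pow 17 x))).sub (HasDerivAt.const_mul ((1:ℝ)/7297371648000) (hasDerivAt_pow 19 x))).congr_deriv ?_
      push_cast; ring)
    (gLo_cont.intervalIntegrable 0 (π/3))
  rw [h]
  norm_num

lemma g_poly_bnd : ∀ t : ℝ, 0 ≤ t → t ≤ 1.048 → -1 ≤ gLo t ∧ gUp t ≤ 1 := by
  intro t ht0 ht1
  have hb2 : t^2 ≤ 4 := le_trans (pow_le_pow_left₀ ht0 ht1 2) (by norm_num)
  have hc2 : (0:ℝ) ≤ t^2 := by positivity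
  have hb4 : t^4 ≤ 4 := le_trans (pow_le_pow_left₀ ht0 ht1 4) (by norm_num)
  have hc4 : (0:ℝ) ≤ t^4 := by positivity
  have hb6 : t^6 ≤ 4 := le_trans (pow_le_pow_left₀ ht0 ht1 6) (by norm_num)
  have hc6 : (0:ℝ) ≤ t^6 := by positivity
  have hb8 : t^8 ≤ 4 := le_trans (pow_le_pow_left₀ ht0 ht1 8) (by norm_num)
  have hc8 : (0:ℝ) ≤ t^8 := by positivity
  have hb10 : t^10 ≤ 4 := le_trans (pow_le_pow_left₀ ht0 ht1 10) (by norm_num)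
  have hc10 : (0:ℝ) ≤ t^10 := by positivity
  have hb12 : t^12 ≤ 4 := le_trans (pow_le_pow_left₀ ht0 ht1 12) (by norm_num)
  have hc12 : (0:ℝ) ≤ t^12 := by positivity
  have hb14 : t^14 ≤ 4 := le_trans (pow_le_pow_left₀ ht0 ht1 14) (by norm_num)
  have hc14 : (0:ℝ) ≤ t^14 := by positivity
  have hb16 : t^16 ≤ 4 := le_trans (pow_le_pow_left₀ ht0 ht1 16) (by norm_num)
  have hc16 : (0:ℝ) ≤ t^16 := by positivity
  have hb18 : t^18 ≤ 4 := le_trans (pow_le_pow_left₀ ht0 ht1 18) (by norm_num)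
  have hc18 : (0:ℝ) ≤ t^18 := by positivity
  have hb20 : t^20 ≤ 4 := le_trans (pow_le_pow_left₀ ht0 ht1 20) (by norm_num)
  have hc20 : (0:ℝ) ≤ t^20 := by positivity
  have hb22 : t^22 ≤ 4 := le_trans (pow_le_pow_left₀ ht0 ht1 22) (by norm_num)
  have hc22 : (0:ℝ) ≤ t^22 := by positivity
  have hb24 : t^24 ≤ 4 := le_trans (pow_le_pow_left₀ ht0 ht1 24) (by norm_num)
  have hc24 : (0:ℝ) ≤ t^24 := by positivity
  constructor
  · simp only [gLo]; linarith
  · simp only [gUp]; linarith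

lemma log_intable : IntervalIntegrable Real.log volume 0 (π/3) := by
  have h1 : IntegrableOn (fun x : ℝ => 1 - Real.log x) (Ioc 0 (π/3)) := by
    apply intervalIntegral.integrableOn_deriv_of_nonneg
      (g := fun x : ℝ => 2*x - x*Real.log x)
      (((continuous_const.mul continuous_id).sub Real.continuous_mul_log).continuousOn)
    · intro x hx
      exact (((hasDerivAt_id x).const_mul 2).sub (Real.hasDerivAt_mul_log hx.1.ne')).congr_deriv
        (by ring)
    · intro x hx
      have h2 := Real.log_le_sub_one_of_pos hx.1
      have h3 : x < π/3 := hx.2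
      have h4 : π < 3.141593 := Real.pi_lt_d6
      linarith
  have h2 : IntegrableOn (fun x : ℝ => 1 - (1 - Real.log x)) (Ioc 0 (π/3)) :=
    (integrableOn_const measure_Ioc_lt_top.ne).sub h1
  rw [intervalIntegrable_iff_integrableOn_Ioc_of_le (by positivity)]
  have h3 : (fun x : ℝ => 1 - (1 - Real.log x)) = Real.log := by
    funext x; ring
  rwa [h3] at h2

lemma log_intval : ∫ t in (0:ℝ)..(π/3), Real.log t = (π/3)*Real.log (π/3) - π/3 := by
  have h := intervalIntegral.integral_eq_sub_of_hasDeriv_right_of_le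
    (f := fun x : ℝ => x*Real.log x - x) (f' := Real.log) (a := 0) (b := π/3)
    (by positivity)
    ((Real.continuous_mul_log.sub continuous_id).continuousOn)
    (fun x hx => (((Real.hasDerivAt_mul_log hx.1.ne').sub (hasDerivAt_id x)).congr_deriv
      (by ring)).hasDerivWithinAt)
    log_intable
  rw [h]
  simp

lemma g_intable : IntervalIntegrable (fun t : ℝ => Real.log (Real.sin t) - Real.log t) volume 0 (π/3) := by
  have hp : π/3 ≤ 1.048 := by nlinarith [Real.pi_lt_d6]
  rw [intervalIntegrable_iff_integrableOn_Ioc_of_le (by positivity)]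
  apply Measure.integrableOn_of_bounded (M := 1) measure_Ioc_lt_top.ne
    ((Real.measurable_log.comp Real.continuous_sin.measurable).sub Real.measurable_log).aestronglyMeasurable
  rw [ae_restrict_iff' measurableSet_Ioc]
  refine ae_of_all _ (fun x hx => ?_)
  have hb := g_bounds x hx.1.le (le_trans hx.2 hp)
  have hbb := g_poly_bnd x hx.1.le (le_trans hx.2 hp)
  rw [Real.norm_eq_abs, abs_le]
  constructor <;> simp only [Pi.sub_apply, Function.comp_apply] <;> linarith [hb.1, hb.2, hbb.1, hbb.2]

lemma key_eq : (∫ t in (0:ℝ)..(π/3), Real.log |2*Real.sin t|) =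
    (π/3)*Real.log 2 + ((π/3)*Real.log (π/3) - π/3) +
      ∫ t in (0:ℝ)..(π/3), (Real.log (Real.sin t) - Real.log t) := by
  have hle : (0:ℝ) ≤ π/3 := by positivity
  have hsplit : (∫ t in (0:ℝ)..(π/3), Real.log |2*Real.sin t|) =
      ∫ t in (0:ℝ)..(π/3), ((Real.log 2 + Real.log t) + (Real.log (Real.sin t) - Real.log t)) := by
    apply intervalIntegral.integral_congr_ae
    refine ae_of_all _ (fun x hx => ?_)
    rw [uIoc_of_le hle] at hx
    have hx0 : 0 < x := hx.1
    have hsin : 0 < Real.sin x := Real.sin_pos_of_pos_of_lt_pi hx0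
      (lt_of_le_of_lt hx.2 (by linarith [Real.pi_gt_three]))
    rw [abs_of_pos (by positivity : (0:ℝ) < 2*Real.sin x), Real.log_mul two_ne_zero hsin.ne']
    ring
  rw [hsplit, intervalIntegral.integral_add (intervalIntegrable_const.add log_intable) g_intable,
      intervalIntegral.integral_add intervalIntegrable_const log_intable,
      intervalIntegral.integral_const, log_intval]
  simp [smul_eq_mul]

lemma logp_ub : Real.log (π/3) ≤ 0.0461178 := by
  have h1 : Real.log (π/3) ≤ Real.log (3141593/3000000) := by
    rw [Real.log_le_log_iff (by positivity) (by norm_num)]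
    nlinarith [Real.pi_lt_d6]
  have habs := Real.abs_log_sub_add_sum_range_le
    (x := (141593/3141593:ℝ)) (by rw [abs_of_nonneg (by norm_num)]; norm_num) 6
  rw [abs_of_nonneg (by norm_num : (0:ℝ) ≤ 141593/3141593), abs_le] at habs
  simp only [Finset.sum_range_succ, Finset.sum_range_zero] at habs
  obtain ⟨ha, _⟩ := habs
  have h2 : Real.log (1 - 141593/3141593 : ℝ) = -Real.log (3141593/3000000) := by
    rw [show (1 - 141593/3141593 : ℝ) = ((3141593:ℝ)/3000000)⁻¹ by norm_num, Real.log_inv]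
  rw [h2] at ha
  norm_num at ha ⊢
  linarith

lemma logp_lb : (0.0461173:ℝ) ≤ Real.log (π/3) := by
  have h1 : Real.log (3141592/3000000) ≤ Real.log (π/3) := by
    rw [Real.log_le_log_iff (by norm_num) (by positivity)]
    nlinarith [Real.pi_gt_d6]
  have habs := Real.abs_log_sub_add_sum_range_le
    (x := (141592/3141592:ℝ)) (by rw [abs_of_nonneg (by norm_num)]; norm_num) 6
  rw [abs_of_nonneg (by norm_num : (0:ℝ) ≤ 141592/3141592), abs_le] at habs
  simp only [Finset.sum_range_succ, Finset.sum_range_zero] at habs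
  obtain ⟨_, hb⟩ := habs
  have h2 : Real.log (1 - 141592/3141592 : ℝ) = -Real.log (3141592/3000000) := by
    rw [show (1 - 141592/3141592 : ℝ) = ((3141592:ℝ)/3000000)⁻¹ by norm_num, Real.log_inv]
  rw [h2] at hb
  norm_num at hb ⊢
  linarith

set_option maxHeartbeats 1000000 in
/-- Numerical bounds for the volume of the regular ideal tetrahedron. -/
theorem regular_ideal_tetrahedron_volume_bounds :
    1.0149 < 3 * lobachevsky (Real.pi / 3) ∧
      3 * lobachevsky (Real.pi / 3) < 1.0150 := by
  have hg := Real.pi_gt_d6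
  have hl := Real.pi_lt_d6
  have hpl : (1.0471973:ℝ) ≤ π/3 := by linarith
  have hph : (π/3:ℝ) ≤ 1.0471977 := by linarith
  have hp148 : (π/3:ℝ) ≤ 1.048 := by linarith
  have hIub : (∫ t in (0:ℝ)..(π/3), (Real.log (Real.sin t) - Real.log t)) ≤
      ∫ t in (0:ℝ)..(π/3), gUp t := by
    apply intervalIntegral.integral_mono_on (by positivity) g_intable
      (gUp_cont.intervalIntegrable 0 (π/3))
    intro x hx
    exact (g_bounds x hx.1 (le_trans hx.2 hp148)).2
  have hIlb : (∫ t in (0:ℝ)..(π/3), gLo t) ≤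
      ∫ t in (0:ℝ)..(π/3), (Real.log (Real.sin t) - Real.log t) := by
    apply intervalIntegral.integral_mono_on (by positivity) (gLo_cont.intervalIntegrable 0 (π/3))
      g_intable
    intro x hx
    exact (g_bounds x hx.1 (le_trans hx.2 hp148)).1
  rw [int_gUp] at hIub
  rw [int_gLo] at hIlb
  have hU3 : (π/3:ℝ)^3 ≤ ((2870953:ℝ)/2500000) := le_trans (pow_le_pow_left₀ (by positivity) hph 3) (by norm_num)
  have hL3 : ((11483797:ℝ)/10000000) ≤ (π/3:ℝ)^3 := le_trans (by norm_num) (pow_le_pow_left₀ (by norm_num) hpl 3)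
  have hU5 : (π/3:ℝ)^5 ≤ ((3148353:ℝ)/2500000) := le_trans (pow_le_pow_left₀ (by positivity) hph 5) (by norm_num)
  have hL5 : ((12593387:ℝ)/10000000) ≤ (π/3:ℝ)^5 := le_trans (by norm_num) (pow_le_pow_left₀ (by norm_num) hpl 5)
  have hU7 : (π/3:ℝ)^7 ≤ ((6905113:ℝ)/5000000) := le_trans (pow_le_pow_left₀ (by positivity) hph 7) (by norm_num)
  have hL7 : ((3452547:ℝ)/2500000) ≤ (π/3:ℝ)^7 := le_trans (by norm_num) (pow_le_pow_left₀ (by norm_num) hpl 7)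
  have hU9 : (π/3:ℝ)^9 ≤ ((15144611:ℝ)/10000000) := le_trans (pow_le_pow_left₀ (by positivity) hph 9) (by norm_num)
  have hL9 : ((7572279:ℝ)/5000000) ≤ (π/3:ℝ)^9 := le_trans (by norm_num) (pow_le_pow_left₀ (by norm_num) hpl 9)
  have hU11 : (π/3:ℝ)^11 ≤ ((16607929:ℝ)/10000000) := le_trans (pow_le_pow_left₀ (by positivity) hph 11) (by norm_num)
  have hL11 : ((16607859:ℝ)/10000000) ≤ (π/3:ℝ)^11 := le_trans (by norm_num) (pow_le_pow_left₀ (by norm_num) hpl 11)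
  have hU13 : (π/3:ℝ)^13 ≤ ((9106319:ℝ)/5000000) := le_trans (pow_le_pow_left₀ (by positivity) hph 13) (by norm_num)
  have hL13 : ((9106273:ℝ)/5000000) ≤ (π/3:ℝ)^13 := le_trans (by norm_num) (pow_le_pow_left₀ (by norm_num) hpl 13)
  have hU15 : (π/3:ℝ)^15 ≤ ((9986199:ℝ)/5000000) := le_trans (pow_le_pow_left₀ (by positivity) hph 15) (by norm_num)
  have hL15 : ((9986141:ℝ)/5000000) ≤ (π/3:ℝ)^15 := le_trans (by norm_num) (pow_le_pow_left₀ (by norm_num) hpl 15)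
  have hU17 : (π/3:ℝ)^17 ≤ ((21902191:ℝ)/10000000) := le_trans (pow_le_pow_left₀ (by positivity) hph 17) (by norm_num)
  have hL17 : ((684439:ℝ)/312500) ≤ (π/3:ℝ)^17 := le_trans (by norm_num) (pow_le_pow_left₀ (by norm_num) hpl 17)
  have hU19 : (π/3:ℝ)^19 ≤ ((24018447:ℝ)/10000000) := le_trans (pow_le_pow_left₀ (by positivity) hph 19) (by norm_num)
  have hL19 : ((750571:ℝ)/312500) ≤ (π/3:ℝ)^19 := le_trans (by norm_num) (pow_le_pow_left₀ (by norm_num) hpl 19)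
  have hU21 : (π/3:ℝ)^21 ≤ ((13169591:ℝ)/5000000) := le_trans (pow_le_pow_left₀ (by positivity) hph 21) (by norm_num)
  have hL21 : ((2633897:ℝ)/1000000) ≤ (π/3:ℝ)^21 := le_trans (by norm_num) (pow_le_pow_left₀ (by norm_num) hpl 21)
  have hU23 : (π/3:ℝ)^23 ≤ ((28884153:ℝ)/10000000) := le_trans (pow_le_pow_left₀ (by positivity) hph 23) (by norm_num)
  have hL23 : ((14441949:ℝ)/5000000) ≤ (π/3:ℝ)^23 := le_trans (by norm_num) (pow_le_pow_left₀ (by norm_num) hpl 23)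
  have hU25 : (π/3:ℝ)^25 ≤ ((31675027:ℝ)/10000000) := le_trans (pow_le_pow_left₀ (by positivity) hph 25) (by norm_num)
  have hL25 : ((7918681:ℝ)/2500000) ≤ (π/3:ℝ)^25 := le_trans (by norm_num) (pow_le_pow_left₀ (by norm_num) hpl 25)
  have hlog2u := Real.log_two_lt_d9
  have hlog2l := Real.log_two_gt_d9
  have hlpu := logp_ub
  have hlpl := logp_lb
  have hlp0 : (0:ℝ) ≤ Real.log (π/3) := by linarith
  have hl20 : (0:ℝ) ≤ Real.log 2 := by linarith
  have hm2u : (π/3) * Real.log 2 ≤ 1.0471977 * 0.6931471808 :=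
    mul_le_mul hph hlog2u.le hl20 (by norm_num)
  have hm2l : 1.0471973 * 0.6931471803 ≤ (π/3) * Real.log 2 :=
    mul_le_mul hpl hlog2l.le (by norm_num) (by positivity)
  have hmpu : (π/3) * Real.log (π/3) ≤ 1.0471977 * 0.0461178 :=
    mul_le_mul hph hlpu hlp0 (by norm_num)
  have hmpl : 1.0471973 * 0.0461173 ≤ (π/3) * Real.log (π/3) :=
    mul_le_mul hpl hlpl (by norm_num) (by positivity)
  have hlob : lobachevsky (Real.pi/3) = -(∫ t in (0:ℝ)..(π/3), Real.log |2*Real.sin t|) := rfl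
  rw [hlob, key_eq]
  constructor
  · linarith
  · linarith
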